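/- Let Ψ, Ξ, Φ ∈ L²(Ω) and define the incoherent nonlinear map N_Φ[Ψ] := λ g_V[|2Ψ−Φ|² + |Φ|²] Ψ. Then ‖N_Φ[Ψ] − N_Φ[Ξ]‖_{L²} ≤ 8 ‖λ‖_{L^∞} ‖V‖_{L^∞(ℝ^d)} (‖Ψ‖²_{L²} + ‖Ξ‖²_{L²} + ‖Φ‖²_{L²}) ‖Ψ − Ξ‖_{L²}. -/

import Mathlib

open MeasureTheory Complex
open scoped ENNReal NNReal

section Helpers

variable {α : Type*} [MeasurableSpace α] {μ : Measure α}

lemma amgm (a b : ℝ≥0∞) : 2*(a*b) ≤ a^2+b^2 := by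
  rcases eq_or_ne a ⊤ with rfl|ha
  · rcases eq_or_ne b 0 with rfl|hb
    · simp
    · simp [ENNReal.top_mul hb, ENNReal.top_pow]
  rcases eq_or_ne b ⊤ with rfl|hb
  · rcases eq_or_ne a 0 with rfl|ha0
    · simp
    · simp [ENNReal.mul_top ha0, ENNReal.top_pow]
  lift a to ℝ≥0 using ha
  lift b to ℝ≥0 using hb
  rw [← ENNReal.coe_mul, ← ENNReal.coe_pow, ← ENNReal.coe_pow, ← ENNReal.coe_add,
    ← ENNReal.coe_ofNat, ← ENNReal.coe_mul, ENNReal.coe_le_coe, ← NNReal.coe_le_coe]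
  push_cast
  nlinarith [sq_nonneg ((a:ℝ) - b)]

lemma scalar_ineq (a b c : ℝ≥0∞) :
    (2*a+c)^2 + c^2 + ((2*b+c)^2 + c^2) + 4*((a+b+c)*(a+b)) ≤ 16*(a^2+b^2+c^2) := by
  have key : (2*a+c)^2 + c^2 + ((2*b+c)^2 + c^2) + 4*((a+b+c)*(a+b))
      = 8*a^2+8*b^2+4*c^2 + (4*(2*(a*b)) + 4*(2*(a*c)) + 4*(2*(b*c))) := by ring
  rw [key]
  calc 8*a^2+8*b^2+4*c^2 + (4*(2*(a*b)) + 4*(2*(a*c)) + 4*(2*(b*c)))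
      ≤ 8*a^2+8*b^2+4*c^2 + (4*(a^2+b^2) + 4*(a^2+c^2) + 4*(b^2+c^2)) := by
        gcongr
        exacts [amgm a b, amgm a c, amgm b c]
    _ = 16*a^2+16*b^2+12*c^2 := by ring
    _ ≤ 16*a^2+16*b^2+16*c^2 := by gcongr <;> norm_num
    _ = 16*(a^2+b^2+c^2) := by ring

lemma lint_sq_cast (f : α → ℝ≥0∞) : ∫⁻ x, f x ^ (2:ℝ) ∂μ = ∫⁻ x, f x ^ (2:ℕ) ∂μ := by
  refine lintegral_congr fun x => ?_
  rw [← ENNReal.rpow_natCast]; norm_num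

lemma eLpNorm_two (f : α → ℂ) : eLpNorm f 2 μ = (∫⁻ x, (‖f x‖₊ : ℝ≥0∞)^2 ∂μ)^(1/2 : ℝ) := by
  rw [eLpNorm_eq_lintegral_rpow_enorm_toReal (by norm_num) (by norm_num)]
  rw [show ((2:ℝ≥0∞).toReal) = (2:ℝ) by norm_num, lint_sq_cast]
  rfl

lemma sq_eLpNorm_two (f : α → ℂ) : eLpNorm f 2 μ ^ 2 = ∫⁻ x, (‖f x‖₊ : ℝ≥0∞)^2 ∂μ := by
  rw [eLpNorm_two, ← ENNReal.rpow_natCast _ 2, ← ENNReal.rpow_mul]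
  norm_num

lemma cauchy_schwarz {f g : α → ℝ≥0∞} (hf : AEMeasurable f μ) (hg : AEMeasurable g μ) :
    ∫⁻ x, f x * g x ∂μ ≤ (∫⁻ x, f x ^2 ∂μ)^(1/2:ℝ) * (∫⁻ x, g x ^2 ∂μ)^(1/2:ℝ) := by
  have := ENNReal.lintegral_mul_le_Lp_mul_Lq μ
    (Real.holderConjugate_iff_eq_conjExponent (by norm_num) |>.mpr (by norm_num) :
      Real.HolderConjugate 2 2) hf hg
  rw [← lint_sq_cast, ← lint_sq_cast]
  exact this

lemma rpow_half_sq_mul (K X : ℝ≥0∞) : (K^2 * X)^(1/2:ℝ) = K * X^(1/2:ℝ) := by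
  rw [ENNReal.mul_rpow_of_nonneg _ _ (by norm_num), ← ENNReal.rpow_natCast K 2,
    ← ENNReal.rpow_mul]
  norm_num

lemma eLpNorm_le_of_bound {f g1 g2 : α → ℂ} {K1 K2 : ℝ≥0∞}
    (hg1 : AEMeasurable (fun x => (‖g1 x‖₊ : ℝ≥0∞)) μ)
    (hg2 : AEMeasurable (fun x => (‖g2 x‖₊ : ℝ≥0∞)) μ)
    (h : ∀ᵐ x ∂μ, (‖f x‖₊ : ℝ≥0∞) ≤ K1 * ‖g1 x‖₊ + K2 * ‖g2 x‖₊) :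
    eLpNorm f 2 μ ≤ K1 * eLpNorm g1 2 μ + K2 * eLpNorm g2 2 μ := by
  rw [eLpNorm_two, eLpNorm_two, eLpNorm_two]
  calc (∫⁻ x, (‖f x‖₊ : ℝ≥0∞)^2 ∂μ)^(1/2:ℝ)
      ≤ (∫⁻ x, (K1 * ‖g1 x‖₊ + K2 * ‖g2 x‖₊)^2 ∂μ)^(1/2:ℝ) := by
        refine ENNReal.rpow_le_rpow (lintegral_mono_ae ?_) (by norm_num)
        filter_upwards [h] with x hx
        exact pow_le_pow_left' hx 2
    _ ≤ (∫⁻ x, (K1 * ‖g1 x‖₊)^2 ∂μ)^(1/2:ℝ) + (∫⁻ x, (K2 * ‖g2 x‖₊)^2 ∂μ)^(1/2:ℝ) := by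
        have := ENNReal.lintegral_Lp_add_le (p := 2)
          (hg1.const_mul K1) (hg2.const_mul K2) (by norm_num)
        simp only [lint_sq_cast] at this
        exact this
    _ = K1 * (∫⁻ x, (‖g1 x‖₊ : ℝ≥0∞)^2 ∂μ)^(1/2:ℝ)
        + K2 * (∫⁻ x, (‖g2 x‖₊ : ℝ≥0∞)^2 ∂μ)^(1/2:ℝ) := by
        rw [← rpow_half_sq_mul K1, ← rpow_half_sq_mul K2]
        congr 2
        · rw [← lintegral_const_mul'' _ (hg1.pow_const 2)]
          exact lintegral_congr fun x => by rw [mul_pow]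
        · rw [← lintegral_const_mul'' _ (hg2.pow_const 2)]
          exact lintegral_congr fun x => by rw [mul_pow]

lemma Lp_add3 {f g h : α → ℂ}
    (hf : AEMeasurable (fun x => (‖f x‖₊ : ℝ≥0∞)) μ)
    (hg : AEMeasurable (fun x => (‖g x‖₊ : ℝ≥0∞)) μ)
    (hh : AEMeasurable (fun x => (‖h x‖₊ : ℝ≥0∞)) μ) :
    (∫⁻ x, ((‖f x‖₊ : ℝ≥0∞) + ‖g x‖₊ + ‖h x‖₊)^2 ∂μ)^(1/2:ℝ)
      ≤ eLpNorm f 2 μ + eLpNorm g 2 μ + eLpNorm h 2 μ := by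
  rw [eLpNorm_two, eLpNorm_two, eLpNorm_two]
  calc (∫⁻ x, ((‖f x‖₊ : ℝ≥0∞) + ‖g x‖₊ + ‖h x‖₊)^2 ∂μ)^(1/2:ℝ)
      ≤ (∫⁻ x, ((‖f x‖₊ : ℝ≥0∞) + ‖g x‖₊)^2 ∂μ)^(1/2:ℝ)
        + (∫⁻ x, (‖h x‖₊ : ℝ≥0∞)^2 ∂μ)^(1/2:ℝ) := by
        have := ENNReal.lintegral_Lp_add_le (p := 2) (hf.add hg) hh (by norm_num)
        simp only [lint_sq_cast] at this
        exact this
    _ ≤ _ := by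
        gcongr
        have := ENNReal.lintegral_Lp_add_le (p := 2) hf hg (by norm_num)
        simp only [lint_sq_cast] at this
        exact this

lemma abs_sq_sub_abs_sq (z w : ℂ) :
    |‖z‖^2 - ‖w‖^2| ≤ (‖z‖+‖w‖)*‖z-w‖ := by
  have h1 : ‖z‖ = ‖z‖ := rfl
  have h2 : ‖w‖ = ‖w‖ := rfl
  rw [h1, h2, sq_sub_sq, abs_mul]
  have h : |‖z‖ - ‖w‖| ≤ ‖z - w‖ := abs_norm_sub_norm_le z w
  rw [_root_.abs_of_nonneg (by positivity : (0:ℝ) ≤ ‖z‖ + ‖w‖)]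
  exact mul_le_mul_of_nonneg_left h (by positivity)

lemma eta_norm_le (Ψ Φ : ℂ) :
    (‖(((‖(2*Ψ - Φ)‖ : ℝ) : ℂ))^2 + (((‖Φ‖ : ℝ) : ℂ))^2‖₊ : ℝ≥0∞)
      ≤ (‖2*Ψ - Φ‖₊ : ℝ≥0∞)^2 + (‖Φ‖₊ : ℝ≥0∞)^2 := by
  norm_cast
  rw [← NNReal.coe_le_coe]
  push_cast [coe_nnnorm]
  rw [Real.norm_eq_abs, _root_.abs_of_nonneg (by positivity)]

lemma eta_diff_le (Ψ Ξ Φ : ℂ) :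
    (‖((((‖(2*Ψ - Φ)‖ : ℝ) : ℂ))^2 + (((‖Φ‖ : ℝ) : ℂ))^2)
        - ((((‖(2*Ξ - Φ)‖ : ℝ) : ℂ))^2 + (((‖Φ‖ : ℝ) : ℂ))^2)‖₊ : ℝ≥0∞)
      ≤ (2*((‖Ψ‖₊:ℝ≥0∞)+(‖Ξ‖₊:ℝ≥0∞)+(‖Φ‖₊:ℝ≥0∞))) * (2*(‖Ψ - Ξ‖₊:ℝ≥0∞)) := by
  norm_cast
  rw [← NNReal.coe_le_coe]
  push_cast [coe_nnnorm]
  rw [Real.norm_eq_abs]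
  have key := abs_sq_sub_abs_sq (2*Ψ - Φ) (2*Ξ - Φ)
  have e1 : (2*Ψ - Φ) - (2*Ξ - Φ) = 2*(Ψ - Ξ) := by ring
  rw [e1] at key
  have h2 : ‖(2:ℂ)*(Ψ-Ξ)‖ = 2*‖Ψ-Ξ‖ := by rw [norm_mul]; norm_num
  calc |‖2*Ψ-Φ‖^2 + ‖Φ‖^2 - (‖2*Ξ-Φ‖^2 + ‖Φ‖^2)|
      = |‖2*Ψ-Φ‖^2 - ‖2*Ξ-Φ‖^2| := by ring_nf
    _ ≤ (‖2*Ψ-Φ‖+‖2*Ξ-Φ‖)*‖2*(Ψ-Ξ)‖ := key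
    _ ≤ (2*(‖Ψ‖+‖Ξ‖+‖Φ‖))*(2*‖Ψ-Ξ‖) := by
        rw [h2]
        have b1 : ‖2*Ψ-Φ‖ ≤ 2*‖Ψ‖+‖Φ‖ := by
          calc ‖2*Ψ-Φ‖ ≤ ‖2*Ψ‖+‖Φ‖ := norm_sub_le _ _
          _ = 2*‖Ψ‖+‖Φ‖ := by rw [norm_mul]; norm_num
        have b2 : ‖2*Ξ-Φ‖ ≤ 2*‖Ξ‖+‖Φ‖ := by
          calc ‖2*Ξ-Φ‖ ≤ ‖2*Ξ‖+‖Φ‖ := norm_sub_le _ _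
          _ = 2*‖Ξ‖+‖Φ‖ := by rw [norm_mul]; norm_num
        have hs : ‖2*Ψ-Φ‖+‖2*Ξ-Φ‖ ≤ 2*(‖Ψ‖+‖Ξ‖+‖Φ‖) := by linarith
        exact mul_le_mul_of_nonneg_right hs (by positivity)

end Helpers

/-- The nonlocal term `g_V[η](x) = ∫_Ω V(x-y) η(y) dy`. -/
noncomputable def gV {d : ℕ} (Ω : Set (EuclideanSpace ℝ (Fin d)))
    (V : EuclideanSpace ℝ (Fin d) → ℂ) (η : EuclideanSpace ℝ (Fin d) → ℂ)
    (x : EuclideanSpace ℝ (Fin d)) : ℂ :=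
  ∫ y in Ω, V (x - y) * η y

/-- The incoherent nonlinear map `N_Φ[Ψ] = λ g_V[|2Ψ−Φ|² + |Φ|²] Ψ`. -/
noncomputable def incoherentN {d : ℕ} (Ω : Set (EuclideanSpace ℝ (Fin d)))
    (lam V Φ Ψ : EuclideanSpace ℝ (Fin d) → ℂ)
    (x : EuclideanSpace ℝ (Fin d)) : ℂ :=
  lam x *
    gV Ω V (fun y => (((‖2 * Ψ y - Φ y‖ : ℝ) : ℂ) ^ 2
      + ((‖Φ y‖ : ℝ) : ℂ) ^ 2)) x * Ψ x

section gVLemmas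

variable {d : ℕ} {Ω : Set (EuclideanSpace ℝ (Fin d))} {V η η₁ η₂ : EuclideanSpace ℝ (Fin d) → ℂ}

lemma V_ae_bound (x : EuclideanSpace ℝ (Fin d)) :
    ∀ᵐ y ∂(volume.restrict Ω), (‖V (x - y)‖₊ : ℝ≥0∞) ≤ eLpNorm V ⊤ volume := by
  refine ae_restrict_of_ae ?_
  have h0 : ∀ᵐ z ∂(volume : Measure (EuclideanSpace ℝ (Fin d))),
      (‖V z‖₊ : ℝ≥0∞) ≤ eLpNormEssSup V volume := ae_le_eLpNormEssSup
  have hmp : MeasurePreserving (fun y : EuclideanSpace ℝ (Fin d) => x - y) volume volume :=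
    Measure.measurePreserving_sub_left volume x
  simpa [eLpNorm_exponent_top] using hmp.quasiMeasurePreserving.ae h0

lemma gV_enorm_le (hη : AEMeasurable (fun y => (‖η y‖₊ : ℝ≥0∞)) (volume.restrict Ω))
    (x : EuclideanSpace ℝ (Fin d)) :
    (‖gV Ω V η x‖₊ : ℝ≥0∞) ≤ eLpNorm V ⊤ volume * ∫⁻ y in Ω, (‖η y‖₊ : ℝ≥0∞) := by
  refine le_trans (enorm_integral_le_lintegral_enorm _) ?_
  calc ∫⁻ y in Ω, (‖V (x - y) * η y‖₊ : ℝ≥0∞)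
      ≤ ∫⁻ y in Ω, eLpNorm V ⊤ volume * (‖η y‖₊ : ℝ≥0∞) := by
        refine lintegral_mono_ae ?_
        filter_upwards [V_ae_bound (V := V) x] with y hy
        rw [nnnorm_mul, ENNReal.coe_mul]
        exact mul_le_mul_left hy _
    _ = eLpNorm V ⊤ volume * ∫⁻ y in Ω, (‖η y‖₊ : ℝ≥0∞) := lintegral_const_mul'' _ hη

lemma integrable_V_mul (hV : AEStronglyMeasurable V volume) (hVtop : eLpNorm V ⊤ volume ≠ ⊤)
    (hη : AEStronglyMeasurable η (volume.restrict Ω))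
    (hηint : ∫⁻ y in Ω, (‖η y‖₊ : ℝ≥0∞) ≠ ⊤) (x : EuclideanSpace ℝ (Fin d)) :
    Integrable (fun y => V (x - y) * η y) (volume.restrict Ω) := by
  have hmp : MeasurePreserving (fun y : EuclideanSpace ℝ (Fin d) => x - y) volume volume :=
    Measure.measurePreserving_sub_left volume x
  have hVm : AEStronglyMeasurable (fun y => V (x - y)) (volume.restrict Ω) :=
    (hV.comp_measurePreserving hmp).restrict
  refine ⟨hVm.mul hη, ?_⟩
  rw [HasFiniteIntegral]
  calc ∫⁻ y in Ω, (‖V (x - y) * η y‖₊ : ℝ≥0∞)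
      ≤ ∫⁻ y in Ω, eLpNorm V ⊤ volume * (‖η y‖₊ : ℝ≥0∞) := by
        refine lintegral_mono_ae ?_
        filter_upwards [V_ae_bound (V := V) x] with y hy
        rw [nnnorm_mul, ENNReal.coe_mul]
        exact mul_le_mul_left hy _
    _ = eLpNorm V ⊤ volume * ∫⁻ y in Ω, (‖η y‖₊ : ℝ≥0∞) :=
        lintegral_const_mul'' _ hη.enorm
    _ < ⊤ := ENNReal.mul_lt_top hVtop.lt_top hηint.lt_top

lemma gV_sub (hV : AEStronglyMeasurable V volume) (hVtop : eLpNorm V ⊤ volume ≠ ⊤)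
    (hη₁ : AEStronglyMeasurable η₁ (volume.restrict Ω))
    (h1int : ∫⁻ y in Ω, (‖η₁ y‖₊ : ℝ≥0∞) ≠ ⊤)
    (hη₂ : AEStronglyMeasurable η₂ (volume.restrict Ω))
    (h2int : ∫⁻ y in Ω, (‖η₂ y‖₊ : ℝ≥0∞) ≠ ⊤) (x : EuclideanSpace ℝ (Fin d)) :
    gV Ω V η₁ x - gV Ω V η₂ x = gV Ω V (fun y => η₁ y - η₂ y) x := by
  unfold gV
  rw [← integral_sub (integrable_V_mul hV hVtop hη₁ h1int x)
    (integrable_V_mul hV hVtop hη₂ h2int x)]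
  exact integral_congr_ae (Filter.Eventually.of_forall fun y => by ring)

end gVLemmas

/-- Lipschitz bound for the incoherent nonlinear map,
`‖N_Φ[Ψ] − N_Φ[Ξ]‖_{L²}
  ≤ 8 ‖λ‖_{L^∞} ‖V‖_{L^∞(ℝ^d)} (‖Ψ‖₂² + ‖Ξ‖₂² + ‖Φ‖₂²) ‖Ψ − Ξ‖₂`. -/
theorem incoherentN_lipschitz {d : ℕ}
    (Ω : Set (EuclideanSpace ℝ (Fin d))) (hΩmeas : MeasurableSet Ω)
    (hΩbdd : Bornology.IsBounded Ω)
    (lam V Φ Ψ Ξ : EuclideanSpace ℝ (Fin d) → ℂ)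
    (hlam : AEStronglyMeasurable lam (volume.restrict Ω))
    (hV : AEStronglyMeasurable V volume)
    (hΦ : AEStronglyMeasurable Φ (volume.restrict Ω))
    (hΨ : AEStronglyMeasurable Ψ (volume.restrict Ω))
    (hΞ : AEStronglyMeasurable Ξ (volume.restrict Ω)) :
    eLpNorm (fun x => incoherentN Ω lam V Φ Ψ x - incoherentN Ω lam V Φ Ξ x) 2
        (volume.restrict Ω)
      ≤ 8 * eLpNorm lam ⊤ (volume.restrict Ω) * eLpNorm V ⊤ volume *
          (eLpNorm Ψ 2 (volume.restrict Ω) ^ 2 + eLpNorm Ξ 2 (volume.restrict Ω) ^ 2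
            + eLpNorm Φ 2 (volume.restrict Ω) ^ 2) *
          eLpNorm (fun x => Ψ x - Ξ x) 2 (volume.restrict Ω) := by
  set μ := volume.restrict Ω with hμdef
  set L := eLpNorm lam ⊤ μ with hLdef
  set Vn := eLpNorm V ⊤ volume with hVndef
  set a := eLpNorm Ψ 2 μ with hadef
  set b := eLpNorm Ξ 2 μ with hbdef
  set c := eLpNorm Φ 2 μ with hcdef
  set δ := eLpNorm (fun x => Ψ x - Ξ x) 2 μ with hδdef
  set η₁ : EuclideanSpace ℝ (Fin d) → ℂ := fun y =>
    (((‖(2 * Ψ y - Φ y)‖ : ℝ) : ℂ) ^ 2 + ((‖(Φ y)‖ : ℝ) : ℂ) ^ 2) with hη₁def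
  set η₂ : EuclideanSpace ℝ (Fin d) → ℂ := fun y =>
    (((‖(2 * Ξ y - Φ y)‖ : ℝ) : ℂ) ^ 2 + ((‖(Φ y)‖ : ℝ) : ℂ) ^ 2) with hη₂def
  have hdiff_eq : ∀ x, incoherentN Ω lam V Φ Ψ x - incoherentN Ω lam V Φ Ξ x
      = lam x * gV Ω V η₁ x * Ψ x - lam x * gV Ω V η₂ x * Ξ x := fun x => rfl
  -- measurability facts
  have habs : Continuous fun z : ℂ => ((‖z‖ : ℝ) : ℂ)^2 :=
    (Complex.continuous_ofReal.comp continuous_norm).pow 2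
  have m2ΨΦ : AEStronglyMeasurable (fun y => 2*Ψ y - Φ y) μ := (hΨ.const_mul 2).sub hΦ
  have m2ΞΦ : AEStronglyMeasurable (fun y => 2*Ξ y - Φ y) μ := (hΞ.const_mul 2).sub hΦ
  have hη₁m : AEStronglyMeasurable η₁ μ :=
    (habs.comp_aestronglyMeasurable m2ΨΦ).add (habs.comp_aestronglyMeasurable hΦ)
  have hη₂m : AEStronglyMeasurable η₂ μ :=
    (habs.comp_aestronglyMeasurable m2ΞΦ).add (habs.comp_aestronglyMeasurable hΦ)
  -- degenerate case: δ = 0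
  by_cases hδ0 : δ = 0
  · have hae : (fun x => Ψ x - Ξ x) =ᵐ[μ] 0 :=
      (eLpNorm_eq_zero_iff (hΨ.sub hΞ) two_ne_zero).mp (hδdef.symm.trans hδ0)
    have hee : ∀ᵐ x ∂μ, Ψ x = Ξ x := by
      filter_upwards [hae] with x hx
      simpa [sub_eq_zero] using hx
    have hηae : η₁ =ᵐ[μ] η₂ := by
      filter_upwards [hee] with y hy
      simp [hη₁def, hη₂def, hy]
    have hGeq : ∀ x, gV Ω V η₁ x = gV Ω V η₂ x := fun x =>
      integral_congr_ae (hηae.mono fun y hy => by simp only [hy])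
    have hz : (fun x => incoherentN Ω lam V Φ Ψ x - incoherentN Ω lam V Φ Ξ x) =ᵐ[μ] 0 := by
      filter_upwards [hee] with x hx
      rw [hdiff_eq x, hGeq x, hx]
      simp [Pi.zero_apply]
    rw [eLpNorm_congr_ae hz, eLpNorm_zero]
    exact zero_le
  -- degenerate case: L = 0
  by_cases hL0 : L = 0
  · have hlamae : lam =ᵐ[μ] 0 :=
      (eLpNorm_eq_zero_iff hlam ENNReal.top_ne_zero).mp (hLdef.symm.trans hL0)
    have hz : (fun x => incoherentN Ω lam V Φ Ψ x - incoherentN Ω lam V Φ Ξ x) =ᵐ[μ] 0 := by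
      filter_upwards [hlamae] with x hx
      rw [hdiff_eq x, hx]
      simp
    rw [eLpNorm_congr_ae hz, eLpNorm_zero]
    exact zero_le
  -- degenerate case: Vn = 0
  by_cases hV0 : Vn = 0
  · have hVae : V =ᵐ[volume] 0 :=
      (eLpNorm_eq_zero_iff hV ENNReal.top_ne_zero).mp (hVndef.symm.trans hV0)
    have hgV0 : ∀ (η : EuclideanSpace ℝ (Fin d) → ℂ) (x), gV Ω V η x = 0 := by
      intro η x
      have hmp : MeasurePreserving (fun y : EuclideanSpace ℝ (Fin d) => x - y) volume volume :=
        Measure.measurePreserving_sub_left volume x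
      have h1 : (fun y : EuclideanSpace ℝ (Fin d) => V (x - y)) =ᵐ[volume] 0 :=
        hmp.quasiMeasurePreserving.ae_eq hVae
      have h2 : (fun y => V (x - y) * η y) =ᵐ[volume.restrict Ω] 0 := by
        filter_upwards [ae_restrict_of_ae (μ := volume) (s := Ω) h1] with y hy
        simp only [Pi.zero_apply] at hy ⊢
        rw [hy, zero_mul]
      simpa [gV] using integral_eq_zero_of_ae h2
    have hz : (fun x => incoherentN Ω lam V Φ Ψ x - incoherentN Ω lam V Φ Ξ x) =ᵐ[μ] 0 := by
      refine Filter.Eventually.of_forall fun x => ?_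
      show incoherentN Ω lam V Φ Ψ x - incoherentN Ω lam V Φ Ξ x = 0
      rw [hdiff_eq x, hgV0 η₁ x, hgV0 η₂ x]
      simp
    rw [eLpNorm_congr_ae hz, eLpNorm_zero]
    exact zero_le
  -- nonzero sum
  have hsum_ne : a^2+b^2+c^2 ≠ 0 := by
    intro h
    rw [add_eq_zero, add_eq_zero] at h
    have haz : a = 0 := pow_eq_zero_iff (two_ne_zero) |>.mp h.1.1
    have hbz : b = 0 := pow_eq_zero_iff (two_ne_zero) |>.mp h.1.2
    have hΨ0 : Ψ =ᵐ[μ] 0 := (eLpNorm_eq_zero_iff hΨ two_ne_zero).mp (hadef.symm.trans haz)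
    have hΞ0 : Ξ =ᵐ[μ] 0 := (eLpNorm_eq_zero_iff hΞ two_ne_zero).mp (hbdef.symm.trans hbz)
    apply hδ0
    have hz : (fun x => Ψ x - Ξ x) =ᵐ[μ] 0 := by
      filter_upwards [hΨ0, hΞ0] with x h1 h2
      simp only [Pi.zero_apply] at h1 h2 ⊢
      rw [h1, h2, sub_zero]
    rw [hδdef, eLpNorm_congr_ae hz, eLpNorm_zero]
  have h8L : (8:ℝ≥0∞)*L ≠ 0 := mul_ne_zero (by norm_num) hL0
  -- top cases
  by_cases htop : Vn = ⊤ ∨ a = ⊤ ∨ b = ⊤ ∨ c = ⊤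
  · have hRtop : 8*L*Vn*(a^2+b^2+c^2)*δ = ⊤ := by
      rcases htop with h|h|h|h
      · rw [h, ENNReal.mul_top h8L, ENNReal.top_mul hsum_ne, ENNReal.top_mul hδ0]
      · have hs : a^2+b^2+c^2 = ⊤ := by rw [h]; simp [ENNReal.top_pow]
        rw [hs, ENNReal.mul_top (mul_ne_zero h8L hV0), ENNReal.top_mul hδ0]
      · have hs : a^2+b^2+c^2 = ⊤ := by rw [h]; simp [ENNReal.top_pow]
        rw [hs, ENNReal.mul_top (mul_ne_zero h8L hV0), ENNReal.top_mul hδ0]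
      · have hs : a^2+b^2+c^2 = ⊤ := by rw [h]; simp [ENNReal.top_pow]
        rw [hs, ENNReal.mul_top (mul_ne_zero h8L hV0), ENNReal.top_mul hδ0]
    exact hRtop ▸ le_top
  push_neg at htop
  obtain ⟨hVnt, hat, hbt, hct⟩ := htop
  -- L² norm bounds
  have h2ΨΦ : eLpNorm (fun y => 2*Ψ y - Φ y) 2 μ ≤ 2*a + c := by
    have e : (fun y => 2*Ψ y - Φ y) = (fun y => (2:ℂ) • Ψ y) - Φ := by
      funext y
      simp [smul_eq_mul]
    rw [e]
    refine (eLpNorm_sub_le (hΨ.const_smul (2:ℂ)) hΦ one_le_two).trans ?_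
    rw [eLpNorm_const_smul]
    have h2 : ‖(2:ℂ)‖ₑ = 2 := by rw [enorm_eq_nnnorm]; simp
    rw [h2, hadef, hcdef]
  have h2ΞΦ : eLpNorm (fun y => 2*Ξ y - Φ y) 2 μ ≤ 2*b + c := by
    have e : (fun y => 2*Ξ y - Φ y) = (fun y => (2:ℂ) • Ξ y) - Φ := by
      funext y
      simp [smul_eq_mul]
    rw [e]
    refine (eLpNorm_sub_le (hΞ.const_smul (2:ℂ)) hΦ one_le_two).trans ?_
    rw [eLpNorm_const_smul]
    have h2 : ‖(2:ℂ)‖ₑ = 2 := by rw [enorm_eq_nnnorm]; simp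
    rw [h2, hbdef, hcdef]
  -- integral bounds for η₁, η₂ and their difference
  have hJ1 : ∫⁻ y, (‖η₁ y‖₊ : ℝ≥0∞) ∂μ ≤ (2*a+c)^2 + c^2 := by
    calc ∫⁻ y, (‖η₁ y‖₊ : ℝ≥0∞) ∂μ
        ≤ ∫⁻ y, ((‖2*Ψ y - Φ y‖₊ : ℝ≥0∞)^2 + (‖Φ y‖₊ : ℝ≥0∞)^2) ∂μ :=
          lintegral_mono fun y => eta_norm_le (Ψ y) (Φ y)
      _ = (∫⁻ y, (‖2*Ψ y - Φ y‖₊ : ℝ≥0∞)^2 ∂μ) + ∫⁻ y, (‖Φ y‖₊ : ℝ≥0∞)^2 ∂μ :=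
          lintegral_add_left' (m2ΨΦ.enorm.pow_const 2) _
      _ = eLpNorm (fun y => 2*Ψ y - Φ y) 2 μ ^2 + eLpNorm Φ 2 μ ^2 := by
          rw [sq_eLpNorm_two, sq_eLpNorm_two]
      _ ≤ (2*a+c)^2 + c^2 := by
          rw [hcdef]
          exact add_le_add (pow_le_pow_left' h2ΨΦ 2) le_rfl
  have hJ2 : ∫⁻ y, (‖η₂ y‖₊ : ℝ≥0∞) ∂μ ≤ (2*b+c)^2 + c^2 := by
    calc ∫⁻ y, (‖η₂ y‖₊ : ℝ≥0∞) ∂μ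
        ≤ ∫⁻ y, ((‖2*Ξ y - Φ y‖₊ : ℝ≥0∞)^2 + (‖Φ y‖₊ : ℝ≥0∞)^2) ∂μ :=
          lintegral_mono fun y => eta_norm_le (Ξ y) (Φ y)
      _ = (∫⁻ y, (‖2*Ξ y - Φ y‖₊ : ℝ≥0∞)^2 ∂μ) + ∫⁻ y, (‖Φ y‖₊ : ℝ≥0∞)^2 ∂μ :=
          lintegral_add_left' (m2ΞΦ.enorm.pow_const 2) _
      _ = eLpNorm (fun y => 2*Ξ y - Φ y) 2 μ ^2 + eLpNorm Φ 2 μ ^2 := by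
          rw [sq_eLpNorm_two, sq_eLpNorm_two]
      _ ≤ (2*b+c)^2 + c^2 := by
          rw [hcdef]
          exact add_le_add (pow_le_pow_left' h2ΞΦ 2) le_rfl
  have hB1t : ((2*a+c)^2 + c^2 : ℝ≥0∞) ≠ ⊤ :=
    ENNReal.add_ne_top.mpr ⟨ENNReal.pow_ne_top
      (ENNReal.add_ne_top.mpr ⟨ENNReal.mul_ne_top (by norm_num) hat, hct⟩),
      ENNReal.pow_ne_top hct⟩
  have hB2t : ((2*b+c)^2 + c^2 : ℝ≥0∞) ≠ ⊤ :=
    ENNReal.add_ne_top.mpr ⟨ENNReal.pow_ne_top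
      (ENNReal.add_ne_top.mpr ⟨ENNReal.mul_ne_top (by norm_num) hbt, hct⟩),
      ENNReal.pow_ne_top hct⟩
  have hJ1ne : ∫⁻ y, (‖η₁ y‖₊ : ℝ≥0∞) ∂μ ≠ ⊤ := ne_top_of_le_ne_top hB1t hJ1
  have hJ2ne : ∫⁻ y, (‖η₂ y‖₊ : ℝ≥0∞) ∂μ ≠ ⊤ := ne_top_of_le_ne_top hB2t hJ2
  have hJd : ∫⁻ y, (‖η₁ y - η₂ y‖₊ : ℝ≥0∞) ∂μ ≤ (2*(a+b+c))*(2*δ) := by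
    have meas1 : AEMeasurable
        (fun y => 2*((‖Ψ y‖₊:ℝ≥0∞)+(‖Ξ y‖₊:ℝ≥0∞)+(‖Φ y‖₊:ℝ≥0∞))) μ :=
      ((hΨ.enorm.add hΞ.enorm).add hΦ.enorm).const_mul 2
    have msub : AEMeasurable (fun y => (‖Ψ y - Ξ y‖₊:ℝ≥0∞)) μ := (hΨ.sub hΞ).enorm
    have msum : AEMeasurable (fun y => (‖Ψ y‖₊:ℝ≥0∞)+(‖Ξ y‖₊:ℝ≥0∞)+(‖Φ y‖₊:ℝ≥0∞)) μ :=
      (hΨ.enorm.add hΞ.enorm).add hΦ.enorm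
    have meas2 : AEMeasurable (fun y => 2*(‖Ψ y - Ξ y‖₊:ℝ≥0∞)) μ := msub.const_mul 2
    calc ∫⁻ y, (‖η₁ y - η₂ y‖₊ : ℝ≥0∞) ∂μ
        ≤ ∫⁻ y, (2*((‖Ψ y‖₊:ℝ≥0∞)+(‖Ξ y‖₊:ℝ≥0∞)+(‖Φ y‖₊:ℝ≥0∞)))
            * (2*(‖Ψ y - Ξ y‖₊:ℝ≥0∞)) ∂μ :=
          lintegral_mono fun y => eta_diff_le (Ψ y) (Ξ y) (Φ y)
      _ ≤ (∫⁻ y, (2*((‖Ψ y‖₊:ℝ≥0∞)+(‖Ξ y‖₊:ℝ≥0∞)+(‖Φ y‖₊:ℝ≥0∞)))^2 ∂μ)^(1/2:ℝ)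
            * (∫⁻ y, (2*(‖Ψ y - Ξ y‖₊:ℝ≥0∞))^2 ∂μ)^(1/2:ℝ) :=
          cauchy_schwarz meas1 meas2
      _ ≤ (2*(a+b+c))*(2*δ) := by
          refine mul_le_mul' ?_ ?_
          · have e1 : ∫⁻ y, (2*((‖Ψ y‖₊:ℝ≥0∞)+(‖Ξ y‖₊:ℝ≥0∞)+(‖Φ y‖₊:ℝ≥0∞)))^2 ∂μ
                = (2:ℝ≥0∞)^2 * ∫⁻ y, ((‖Ψ y‖₊:ℝ≥0∞)+(‖Ξ y‖₊:ℝ≥0∞)+(‖Φ y‖₊:ℝ≥0∞))^2 ∂μ := by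
              rw [← lintegral_const_mul'' _ (msum.pow_const 2)]
              exact lintegral_congr fun y => by rw [mul_pow]
            rw [e1, rpow_half_sq_mul, hadef, hbdef, hcdef]
            exact mul_le_mul_right (Lp_add3 hΨ.enorm hΞ.enorm hΦ.enorm) 2
          · have e2 : ∫⁻ y, (2*(‖Ψ y - Ξ y‖₊:ℝ≥0∞))^2 ∂μ
                = (2:ℝ≥0∞)^2 * ∫⁻ y, (‖Ψ y - Ξ y‖₊:ℝ≥0∞)^2 ∂μ := by
              rw [← lintegral_const_mul'' _ (msub.pow_const 2)]
              exact lintegral_congr fun y => by rw [mul_pow]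
            rw [e2, rpow_half_sq_mul, hδdef, eLpNorm_two]
  -- abbreviations for the three integrals
  obtain ⟨J1, hJ1def⟩ : ∃ J, J = ∫⁻ y, (‖η₁ y‖₊ : ℝ≥0∞) ∂μ := ⟨_, rfl⟩
  obtain ⟨J2, hJ2def⟩ : ∃ J, J = ∫⁻ y, (‖η₂ y‖₊ : ℝ≥0∞) ∂μ := ⟨_, rfl⟩
  obtain ⟨Jd, hJddef⟩ : ∃ J, J = ∫⁻ y, (‖η₁ y - η₂ y‖₊ : ℝ≥0∞) ∂μ := ⟨_, rfl⟩
  rw [← hJ1def] at hJ1 hJ1ne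
  rw [← hJ2def] at hJ2 hJ2ne
  rw [← hJddef] at hJd
  -- pointwise bounds on gV
  have hG1 : ∀ x, (‖gV Ω V η₁ x‖₊:ℝ≥0∞) ≤ Vn * J1 := by
    intro x
    rw [hJ1def]
    exact gV_enorm_le hη₁m.enorm x
  have hG2 : ∀ x, (‖gV Ω V η₂ x‖₊:ℝ≥0∞) ≤ Vn * J2 := by
    intro x
    rw [hJ2def]
    exact gV_enorm_le hη₂m.enorm x
  have hGd : ∀ x, (‖gV Ω V η₁ x - gV Ω V η₂ x‖₊:ℝ≥0∞) ≤ Vn * Jd := by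
    intro x
    rw [hJddef, gV_sub hV hVnt hη₁m (hJ1def ▸ hJ1ne) hη₂m (hJ2def ▸ hJ2ne) x]
    exact gV_enorm_le ((hη₁m.sub hη₂m).enorm) x
  -- the λ bound
  have hlamb : ∀ᵐ x ∂μ, (‖lam x‖₊:ℝ≥0∞) ≤ L := by
    rw [hLdef, eLpNorm_exponent_top]
    exact ae_le_eLpNormEssSup
  -- key pointwise estimate
  have key : ∀ᵐ x ∂μ, (‖(2:ℂ) * (incoherentN Ω lam V Φ Ψ x - incoherentN Ω lam V Φ Ξ x)‖₊ : ℝ≥0∞)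
      ≤ (L*(Vn*J1 + Vn*J2)) * (‖Ψ x - Ξ x‖₊:ℝ≥0∞) + (L*(Vn*Jd)) * (‖Ψ x + Ξ x‖₊:ℝ≥0∞) := by
    filter_upwards [hlamb] with x hx
    have ring_id : (2:ℂ) * (incoherentN Ω lam V Φ Ψ x - incoherentN Ω lam V Φ Ξ x)
        = lam x * ((gV Ω V η₁ x + gV Ω V η₂ x) * (Ψ x - Ξ x)
            + (gV Ω V η₁ x - gV Ω V η₂ x) * (Ψ x + Ξ x)) := by
      rw [hdiff_eq x]
      ring
    rw [ring_id]
    calc (‖lam x * ((gV Ω V η₁ x + gV Ω V η₂ x) * (Ψ x - Ξ x)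
            + (gV Ω V η₁ x - gV Ω V η₂ x) * (Ψ x + Ξ x))‖₊ : ℝ≥0∞)
        = (‖lam x‖₊:ℝ≥0∞) * ‖(gV Ω V η₁ x + gV Ω V η₂ x) * (Ψ x - Ξ x)
            + (gV Ω V η₁ x - gV Ω V η₂ x) * (Ψ x + Ξ x)‖₊ := by
          rw [nnnorm_mul, ENNReal.coe_mul]
      _ ≤ L * (((‖gV Ω V η₁ x‖₊:ℝ≥0∞) + ‖gV Ω V η₂ x‖₊) * ‖Ψ x - Ξ x‖₊
            + (‖gV Ω V η₁ x - gV Ω V η₂ x‖₊:ℝ≥0∞) * ‖Ψ x + Ξ x‖₊) := by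
          refine mul_le_mul' hx ?_
          calc (‖(gV Ω V η₁ x + gV Ω V η₂ x) * (Ψ x - Ξ x)
                + (gV Ω V η₁ x - gV Ω V η₂ x) * (Ψ x + Ξ x)‖₊ : ℝ≥0∞)
              ≤ (‖(gV Ω V η₁ x + gV Ω V η₂ x) * (Ψ x - Ξ x)‖₊:ℝ≥0∞)
                + (‖(gV Ω V η₁ x - gV Ω V η₂ x) * (Ψ x + Ξ x)‖₊:ℝ≥0∞) := by
                rw [← ENNReal.coe_add]
                exact ENNReal.coe_le_coe.mpr (nnnorm_add_le _ _)
            _ ≤ ((‖gV Ω V η₁ x‖₊:ℝ≥0∞) + ‖gV Ω V η₂ x‖₊) * ‖Ψ x - Ξ x‖₊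
                + (‖gV Ω V η₁ x - gV Ω V η₂ x‖₊:ℝ≥0∞) * ‖Ψ x + Ξ x‖₊ := by
                rw [nnnorm_mul, ENNReal.coe_mul, nnnorm_mul, ENNReal.coe_mul]
                refine add_le_add (mul_le_mul_left ?_ _) le_rfl
                rw [← ENNReal.coe_add]
                exact ENNReal.coe_le_coe.mpr (nnnorm_add_le _ _)
      _ ≤ L * ((Vn*J1 + Vn*J2) * ‖Ψ x - Ξ x‖₊ + (Vn*Jd) * ‖Ψ x + Ξ x‖₊) := by
          refine mul_le_mul_right (add_le_add (mul_le_mul_left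
            (add_le_add (hG1 x) (hG2 x)) _) (mul_le_mul_left (hGd x) _)) L
      _ = (L*(Vn*J1 + Vn*J2)) * (‖Ψ x - Ξ x‖₊:ℝ≥0∞) + (L*(Vn*Jd)) * (‖Ψ x + Ξ x‖₊:ℝ≥0∞) := by
          ring
  -- apply the L² estimate
  have hadd : eLpNorm (fun x => Ψ x + Ξ x) 2 μ ≤ a + b := by
    rw [hadef, hbdef]
    exact eLpNorm_add_le hΨ hΞ one_le_two
  have main : eLpNorm
        (fun x => (2:ℂ) * (incoherentN Ω lam V Φ Ψ x - incoherentN Ω lam V Φ Ξ x)) 2 μ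
      ≤ (L*(Vn*J1 + Vn*J2)) * δ + (L*(Vn*Jd)) * (a+b) := by
    refine (eLpNorm_le_of_bound (μ := μ)
      (g1 := fun x => Ψ x - Ξ x) (g2 := fun x => Ψ x + Ξ x)
      ((hΨ.sub hΞ).enorm) ((hΨ.add hΞ).enorm) key).trans ?_
    rw [hδdef]
    exact add_le_add le_rfl (mul_le_mul_right hadd _)
  have h2eLp : eLpNorm
        (fun x => (2:ℂ) * (incoherentN Ω lam V Φ Ψ x - incoherentN Ω lam V Φ Ξ x)) 2 μ
      = 2 * eLpNorm (fun x => incoherentN Ω lam V Φ Ψ x - incoherentN Ω lam V Φ Ξ x) 2 μ := by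
    rw [show (fun x => (2:ℂ) * (incoherentN Ω lam V Φ Ψ x - incoherentN Ω lam V Φ Ξ x))
        = (2:ℂ) • (fun x => incoherentN Ω lam V Φ Ψ x - incoherentN Ω lam V Φ Ξ x) from rfl,
      eLpNorm_const_smul]
    have h2 : ‖(2:ℂ)‖ₑ = 2 := by rw [enorm_eq_nnnorm]; simp
    rw [h2]
  rw [h2eLp] at main
  -- final arithmetic, with all scalars opaque
  clear_value L Vn a b c δ
  have chain : 2 * eLpNorm (fun x => incoherentN Ω lam V Φ Ψ x - incoherentN Ω lam V Φ Ξ x) 2 μ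
      ≤ 2 * (8 * L * Vn * (a^2+b^2+c^2) * δ) := by
    calc 2 * eLpNorm (fun x => incoherentN Ω lam V Φ Ψ x - incoherentN Ω lam V Φ Ξ x) 2 μ
        ≤ (L*(Vn*J1 + Vn*J2)) * δ + (L*(Vn*Jd)) * (a+b) := main
      _ ≤ (L*(Vn*((2*a+c)^2+c^2) + Vn*((2*b+c)^2+c^2))) * δ
            + (L*(Vn*((2*(a+b+c))*(2*δ)))) * (a+b) :=
          add_le_add
            (mul_le_mul_left (mul_le_mul_right
              (add_le_add (mul_le_mul_right hJ1 Vn) (mul_le_mul_right hJ2 Vn)) L) δ)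
            (mul_le_mul_left (mul_le_mul_right (mul_le_mul_right hJd Vn) L) (a+b))
      _ = (L*Vn*δ) * ((2*a+c)^2 + c^2 + ((2*b+c)^2 + c^2) + 4*((a+b+c)*(a+b))) := by
          ring
      _ ≤ (L*Vn*δ) * (16*(a^2+b^2+c^2)) := mul_le_mul_right (scalar_ineq a b c) _
      _ = 2 * (8 * L * Vn * (a^2+b^2+c^2) * δ) := by
          ring
  exact (ENNReal.mul_le_mul_iff_right (by norm_num : (2:ℝ≥0∞) ≠ 0)
    (by norm_num : (2:ℝ≥0∞) ≠ ⊤)).mp chain
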